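/- Let P and Q be probability distributions on a finite alphabet 𝒳 with |𝒳| ≥ 2, and suppose KL(P ‖ Q) ≤ δ with √(δ/2) ≤ 1 − 1/|𝒳|. Then |H(P) − H(Q)| ≤ √(δ/2) · log(|𝒳| − 1) + h₂(√(δ/2)), where h₂(ε) := −ε log ε − (1−ε) log(1−ε) is the binary entropy function. -/

import Mathlib

noncomputable section

open Finset

/-- `p` is a probability mass function on the finite type `X`. -/
def IsPMF {X : Type} [Fintype X] (p : X → ℝ) : Prop :=
  (∀ x, 0 ≤ p x) ∧ ∑ x, p x = 1

/-- Shannon entropy (natural logarithm); `Real.log 0 = 0` gives `0 log 0 = 0`. -/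
def ent {X : Type} [Fintype X] (p : X → ℝ) : ℝ :=
  -∑ x, p x * Real.log (p x)

/-- Kullback–Leibler divergence on a finite alphabet. -/
def KLdiv {X : Type} [Fintype X] (p q : X → ℝ) : ℝ :=
  ∑ x, p x * Real.log (p x / q x)

/-- Marginal on the first coordinate of a joint distribution. -/
def margFst {X Y : Type} [Fintype X] [Fintype Y] (p : X × Y → ℝ) : X → ℝ :=
  fun x => ∑ y, p (x, y)

/-- Conditional entropy `H(Y | X)` of a joint distribution on `X × Y`,
given by the identity `H(Y|X) = H(X,Y) - H(X)`. -/
def condEnt {X Y : Type} [Fintype X] [Fintype Y] (p : X × Y → ℝ) : ℝ :=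
  ent p - ent (margFst p)

/-- Conditional mutual information `I(Y ; Z ∣ X)` of a joint distribution on
`X × Y × Z`, in log-ratio form. -/
def cmi {X Y Z : Type} [Fintype X] [Fintype Y] [Fintype Z] (p : X × Y × Z → ℝ) : ℝ :=
  ∑ x, ∑ y, ∑ z, p (x, y, z) *
    Real.log ((p (x, y, z) * (∑ y', ∑ z', p (x, y', z'))) /
      ((∑ z', p (x, y, z')) * (∑ y', p (x, y', z))))

/-- The length-`k` prefix of a sequence of `K` reasoning tokens. -/
def pfx {C : Type} {K : ℕ} (k : ℕ) (h : k ≤ K) (c : Fin K → C) : Fin k → C :=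
  fun t => c (Fin.castLE h t)

/-- The joint distribution of `(Q, C_{1:k}, A)` obtained by marginalizing the
joint distribution of `(Q, C_{1:K}, A)` over the suffix `C_{k+1:K}`. -/
def prefJoint {Q C A : Type} [Fintype Q] [Fintype C] [Fintype A] [DecidableEq C]
    {K : ℕ} (p : Q × (Fin K → C) × A → ℝ) (k : ℕ) (h : k ≤ K) :
    (Q × (Fin k → C)) × A → ℝ :=
  fun z => ∑ c : Fin K → C, if pfx k h c = z.1.2 then p (z.1.1, c, z.2) else 0

/-- `H(A ∣ Q, C_{1:k})`, the conditional answer entropy at prefix length `k`.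
For `k = 0` this is `H(A ∣ Q)`. -/
def condAnsEnt {Q C A : Type} [Fintype Q] [Fintype C] [Fintype A] [DecidableEq C]
    {K : ℕ} (p : Q × (Fin K → C) × A → ℝ) (k : ℕ) (h : k ≤ K) : ℝ :=
  condEnt (prefJoint p k h)

/-- The joint distribution of `((Q, C_{1:t}), C_{t+1}, A)`, separating token `t+1`
from the earlier prefix. -/
def stepJoint {Q C A : Type} [Fintype Q] [Fintype C] [Fintype A] [DecidableEq C]
    {K : ℕ} (p : Q × (Fin K → C) × A → ℝ) (t : ℕ) (h : t + 1 ≤ K) :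
    (Q × (Fin t → C)) × C × A → ℝ :=
  fun z => prefJoint p (t + 1) h ((z.1.1, Fin.snoc z.1.2 z.2.1), z.2.2)

/-- The joint distribution of `(Q, C_{1:k}, A)` reshaped as a triple, so that
`cmi` computes `I(A ; C_{1:k} ∣ Q)`. -/
def prefTriple {Q C A : Type} [Fintype Q] [Fintype C] [Fintype A] [DecidableEq C]
    {K : ℕ} (p : Q × (Fin K → C) × A → ℝ) (k : ℕ) (h : k ≤ K) :
    Q × (Fin k → C) × A → ℝ :=
  fun z => prefJoint p k h ((z.1, z.2.1), z.2.2)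

/-- Model conditional probability `p(a ∣ q, c_{1:k})`. -/
def condProbA {Q C A : Type} [Fintype Q] [Fintype C] [Fintype A] [DecidableEq C]
    {K : ℕ} (p : Q × (Fin K → C) × A → ℝ) (k : ℕ) (h : k ≤ K)
    (q : Q) (cp : Fin k → C) (a : A) : ℝ :=
  prefJoint p k h ((q, cp), a) / margFst (prefJoint p k h) (q, cp)

/-- Binary entropy function. -/
def h2 (e : ℝ) : ℝ := -e * Real.log e - (1 - e) * Real.log (1 - e)

/-- Total variation distance on a finite alphabet. -/
def tv {X : Type} [Fintype X] (p q : X → ℝ) : ℝ :=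
  (1 / 2) * ∑ x, |p x - q x|

lemma finlt {k K : ℕ} (hkK : k ≤ K) (t : Fin k) : t.1 + 1 ≤ K :=
  Nat.succ_le_of_lt (lt_of_lt_of_le t.2 hkK)

section AuxFA
open Real

def phiP (x : ℝ) : ℝ := x * Real.log x - x + 1 - 3*(x-1)^2/(2*(x+2))
def psiP (x : ℝ) : ℝ := Real.log x - (3/2)*((x-1)*(x+5))/(x+2)^2

lemma hasDerivAt_psiP {x : ℝ} (hx : 0 < x) :
    HasDerivAt psiP (x⁻¹ - 27/(x+2)^3) x := by
  have h2 : x + 2 ≠ 0 := by positivity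
  have h1 : HasDerivAt (fun y : ℝ => (3/2)*((y-1)*(y+5))/(y+2)^2)
      (((3/2)*((x+5)+(x-1)) * (x+2)^2 - (3/2)*((x-1)*(x+5)) * (2*(x+2))) / ((x+2)^2)^2) x := by
    apply HasDerivAt.div
    · simpa using (((hasDerivAt_id x).sub_const 1).mul ((hasDerivAt_id x).add_const 5)).const_mul (3/2)
    · simpa using ((hasDerivAt_id x).add_const 2).fun_pow 2
    · positivity
  have := (Real.hasDerivAt_log hx.ne').sub h1
  refine this.congr_deriv ?_
  field_simp
  ring

lemma hasDerivAt_phiP {x : ℝ} (hx : 0 < x) : HasDerivAt phiP (psiP x) x := by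
  have h2 : (2:ℝ)*(x+2) ≠ 0 := by positivity
  have h1 : HasDerivAt (fun y : ℝ => 3*(y-1)^2/(2*(y+2)))
      ((3*(2*(x-1)) * (2*(x+2)) - 3*(x-1)^2 * 2) / (2*(x+2))^2) x := by
    apply HasDerivAt.div
    · simpa using (((hasDerivAt_id x).sub_const 1).pow 2).const_mul 3
    · simpa using ((hasDerivAt_id x).add_const 2).const_mul 2
    · exact h2
  have hml : HasDerivAt (fun y : ℝ => y * Real.log y) (Real.log x + 1) x :=
    Real.hasDerivAt_mul_log hx.ne'
  have := ((hml.sub (hasDerivAt_id x)).add_const 1).sub h1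
  refine this.congr_deriv ?_
  unfold psiP
  rw [eq_comm, sub_eq_sub_iff_sub_eq_sub]
  field_simp
  ring

lemma psiP_one : psiP 1 = 0 := by simp [psiP]
lemma phiP_one : phiP 1 = 0 := by norm_num [phiP]

lemma psiP_nonneg_of_one_le {x : ℝ} (hx : 1 ≤ x) : 0 ≤ psiP x := by
  have hmono : MonotoneOn psiP (Set.Ici (1:ℝ)) := by
    apply monotoneOn_of_hasDerivWithinAt_nonneg (f' := fun y => y⁻¹ - 27/(y+2)^3)
      (convex_Ici 1)
    · intro y hy
      exact (hasDerivAt_psiP (lt_of_lt_of_le one_pos hy)).continuousAt.continuousWithinAt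
    · intro y hy
      rw [interior_Ici] at hy
      exact (hasDerivAt_psiP (lt_trans one_pos hy)).hasDerivWithinAt
    · intro y hy
      rw [interior_Ici] at hy
      have hy0 : (0:ℝ) < y := lt_trans one_pos hy
      have key : 27 * y ≤ (y+2)^3 := by nlinarith [sq_nonneg (y-1), hy0.le]
      have h1 : 27/(y+2)^3 ≤ y⁻¹ := by
        rw [div_le_iff₀ (by positivity), inv_mul_eq_div, le_div_iff₀ hy0]
        nlinarith
      linarith
  have := hmono (Set.self_mem_Ici) hx hx
  rwa [psiP_one] at this

lemma psiP_nonpos {x : ℝ} (hx0 : 0 < x) (hx : x ≤ 1) : psiP x ≤ 0 := by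
  have hmono : MonotoneOn psiP (Set.Ioc 0 (1:ℝ)) := by
    apply monotoneOn_of_hasDerivWithinAt_nonneg (f' := fun y => y⁻¹ - 27/(y+2)^3)
      (convex_Ioc 0 1)
    · intro y hy
      exact (hasDerivAt_psiP hy.1).continuousAt.continuousWithinAt
    · intro y hy
      have hy' := interior_subset hy
      exact (hasDerivAt_psiP hy'.1).hasDerivWithinAt
    · intro y hy
      have hy' := interior_subset hy
      have hy0 : (0:ℝ) < y := hy'.1
      have h1 : 27/(y+2)^3 ≤ y⁻¹ := by
        rw [div_le_iff₀ (by positivity), inv_mul_eq_div, le_div_iff₀ hy0]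
        nlinarith [sq_nonneg (y-1)]
      linarith
  have := hmono (Set.mem_Ioc.2 ⟨hx0, hx⟩) (Set.mem_Ioc.2 ⟨one_pos, le_refl 1⟩) hx
  rwa [psiP_one] at this

lemma phiP_nonneg {x : ℝ} (hx : 0 < x) : 0 ≤ phiP x := by
  rcases le_total 1 x with h | h
  · have hmono : MonotoneOn phiP (Set.Ici (1:ℝ)) := by
      apply monotoneOn_of_hasDerivWithinAt_nonneg (f' := psiP) (convex_Ici 1)
      · intro y hy
        exact (hasDerivAt_phiP (lt_of_lt_of_le one_pos hy)).continuousAt.continuousWithinAt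
      · intro y hy
        rw [interior_Ici] at hy
        exact (hasDerivAt_phiP (lt_trans one_pos hy)).hasDerivWithinAt
      · intro y hy
        rw [interior_Ici] at hy
        exact psiP_nonneg_of_one_le hy.le
    have := hmono Set.self_mem_Ici h h
    rwa [phiP_one] at this
  · have hanti : AntitoneOn phiP (Set.Ioc 0 (1:ℝ)) := by
      apply antitoneOn_of_hasDerivWithinAt_nonpos (f' := psiP) (convex_Ioc 0 1)
      · intro y hy
        exact (hasDerivAt_phiP hy.1).continuousAt.continuousWithinAt
      · intro y hy
        have hy' := interior_subset hy
        exact (hasDerivAt_phiP hy'.1).hasDerivWithinAt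
      · intro y hy
        have hy' := interior_subset hy
        exact psiP_nonpos hy'.1 hy'.2
    have := hanti (Set.mem_Ioc.2 ⟨hx, h⟩) (Set.mem_Ioc.2 ⟨one_pos, le_refl 1⟩) h
    rwa [phiP_one] at this

lemma phiP_nonneg' {x : ℝ} (hx : 0 < x) :
    0 ≤ x * Real.log x - x + 1 - 3*(x-1)^2/(2*(x+2)) := phiP_nonneg hx

lemma kl_pointwise {p q : ℝ} (hp : 0 ≤ p) (hq : 0 ≤ q) (hac : 0 < p → 0 < q) :
    p - q + 3*(p-q)^2/(2*(p+2*q)) ≤ p * Real.log (p / q) := by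
  rcases eq_or_lt_of_le hp with hp0 | hp0
  · rcases eq_or_lt_of_le hq with hq0 | hq0
    · simp [← hp0, ← hq0]
    · rw [← hp0]
      have : 3*(0-q)^2/(2*(0+2*q)) = 3*q/4 := by
        rw [div_eq_iff (by positivity)]; ring
      rw [this]
      simp only [zero_mul]
      linarith
  · have hq0 : 0 < q := hac hp0
    have hx : 0 < p / q := by positivity
    have h := phiP_nonneg' hx
    have hlog : Real.log (p/q) = Real.log (p/q) := rfl
    have key : q * ((p/q) * Real.log (p/q) - p/q + 1 - 3*(p/q-1)^2/(2*(p/q+2)))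
        = p * Real.log (p/q) - p + q - 3*(p-q)^2/(2*(p+2*q)) := by
      have h1 : p + 2*q ≠ 0 := by positivity
      field_simp
    nlinarith [mul_nonneg hq0.le h]

lemma tv_nonneg {X : Type} [Fintype X] (p q : X → ℝ) : 0 ≤ tv p q := by
  unfold tv
  have : (0:ℝ) ≤ ∑ x, |p x - q x| := Finset.sum_nonneg fun x _ => abs_nonneg _
  linarith

lemma pinsker {X : Type} [Fintype X] (P Q : X → ℝ) (hP : IsPMF P) (hQ : IsPMF Q)
    (hac : ∀ x, 0 < P x → 0 < Q x) :
    tv P Q ≤ Real.sqrt (KLdiv P Q / 2) := by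
  obtain ⟨hP0, hP1⟩ := hP
  obtain ⟨hQ0, hQ1⟩ := hQ
  set B : ℝ := ∑ x, (P x - Q x)^2 / (P x + 2*Q x) with hB
  have hKL : (3/2) * B ≤ KLdiv P Q := by
    have h1 : ∀ x ∈ Finset.univ (α := X),
        (P x - Q x) + (3/2) * ((P x - Q x)^2/(P x + 2*Q x)) ≤ P x * Real.log (P x / Q x) := by
      intro x _
      have := kl_pointwise (hP0 x) (hQ0 x) (hac x)
      have heq : 3*(P x - Q x)^2/(2*(P x + 2*Q x)) = (3/2) * ((P x - Q x)^2/(P x + 2*Q x)) := by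
        rcases eq_or_ne (P x + 2*Q x) 0 with h | h
        · simp [h]
        · field_simp
      rw [heq] at this
      linarith
    have h2 := Finset.sum_le_sum h1
    rw [Finset.sum_add_distrib, Finset.sum_sub_distrib, hP1, hQ1, ← Finset.mul_sum] at h2
    simpa [KLdiv] using h2
  have hCS : (∑ x, |P x - Q x|)^2 ≤ 3 * B := by
    have := Finset.sum_mul_sq_le_sq_mul_sq Finset.univ
      (fun x => Real.sqrt (P x + 2*Q x)) (fun x => |P x - Q x| / Real.sqrt (P x + 2*Q x))
    have heq1 : ∀ x ∈ Finset.univ (α := X),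
        Real.sqrt (P x + 2*Q x) * (|P x - Q x| / Real.sqrt (P x + 2*Q x)) = |P x - Q x| := by
      intro x _
      rcases eq_or_lt_of_le (by nlinarith [hP0 x, hQ0 x] : (0:ℝ) ≤ P x + 2*Q x) with h | h
      · have hp : P x = 0 := by nlinarith [hP0 x, hQ0 x]
        have hq : Q x = 0 := by nlinarith [hP0 x, hQ0 x]
        simp [hp, hq]
      · have hs : Real.sqrt (P x + 2*Q x) ≠ 0 := Real.sqrt_ne_zero'.2 h
        field_simp
    rw [Finset.sum_congr rfl heq1] at this
    have heq2 : ∑ x, Real.sqrt (P x + 2*Q x) ^ 2 = 3 := by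
      have : ∀ x ∈ Finset.univ (α := X), Real.sqrt (P x + 2*Q x) ^ 2 = P x + 2*Q x := by
        intro x _
        exact Real.sq_sqrt (by nlinarith [hP0 x, hQ0 x])
      rw [Finset.sum_congr rfl this, Finset.sum_add_distrib, hP1, ← Finset.mul_sum, hQ1]
      norm_num
    have heq3 : ∑ x, (|P x - Q x| / Real.sqrt (P x + 2*Q x)) ^ 2 = B := by
      apply Finset.sum_congr rfl
      intro x _
      rw [div_pow, sq_abs, Real.sq_sqrt (by nlinarith [hP0 x, hQ0 x])]
    rw [heq2, heq3] at this
    exact this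
  have htv2 : (tv P Q)^2 ≤ KLdiv P Q / 2 := by
    have h : tv P Q = (1/2) * ∑ x, |P x - Q x| := rfl
    rw [h]
    nlinarith [hCS, hKL]
  calc tv P Q = Real.sqrt ((tv P Q)^2) := (Real.sqrt_sq (tv_nonneg P Q)).symm
    _ ≤ Real.sqrt (KLdiv P Q / 2) := Real.sqrt_le_sqrt htv2

lemma ent_eq {X : Type} [Fintype X] (p : X → ℝ) :
    ent p = ∑ x, Real.negMulLog (p x) := by
  simp [ent, Real.negMulLog, Finset.sum_neg_distrib]

lemma h2_eq (e : ℝ) : h2 e = Real.negMulLog e + Real.negMulLog (1 - e) := by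
  simp [h2, Real.negMulLog]; ring

lemma negMulLog_add_le {s u : ℝ} (hs : 0 ≤ s) (hu : 0 ≤ u) :
    Real.negMulLog (s + u) ≤ Real.negMulLog s + Real.negMulLog u := by
  rcases eq_or_lt_of_le hs with h | h
  · simp [← h]
  rcases eq_or_lt_of_le hu with h' | h'
  · simp [← h']
  have h1 : Real.log s ≤ Real.log (s + u) := Real.log_le_log h (by linarith)
  have h2 : Real.log u ≤ Real.log (s + u) := Real.log_le_log h' (by linarith)
  simp only [Real.negMulLog, neg_mul]
  nlinarith

lemma negMulLog_concave_pt {a b t : ℝ} (ha : 0 ≤ a) (hb : 0 ≤ b) (ht0 : 0 ≤ t) (ht1 : t ≤ 1) :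
    (1 - t) * Real.negMulLog a + t * Real.negMulLog b ≤ Real.negMulLog ((1 - t) * a + t * b) := by
  have := Real.concaveOn_negMulLog.2 (Set.mem_Ici.2 ha) (Set.mem_Ici.2 hb)
    (by linarith : (0:ℝ) ≤ 1 - t) ht0 (by ring)
  simpa [smul_eq_mul] using this

lemma ent_nonneg {X : Type} [Fintype X] {p : X → ℝ} (h0 : ∀ x, 0 ≤ p x)
    (h1 : ∑ x, p x = 1) : 0 ≤ ent p := by
  rw [ent_eq]
  apply Finset.sum_nonneg
  intro x _
  apply Real.negMulLog_nonneg (h0 x)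
  calc p x ≤ ∑ y, p y := Finset.single_le_sum (fun y _ => h0 y) (Finset.mem_univ x)
    _ = 1 := h1

lemma ent_le_log_card {X : Type} [Fintype X] (f : X → ℝ) (S : Finset X)
    (hf0 : ∀ x, 0 ≤ f x) (hsum : ∑ x, f x = 1) (hsupp : ∀ x ∉ S, f x = 0) :
    ent f ≤ Real.log S.card := by
  classical
  have hSne : S.Nonempty := by
    by_contra h
    rw [Finset.not_nonempty_iff_eq_empty] at h
    have : ∑ x, f x = 0 := Finset.sum_eq_zero fun x _ => hsupp x (by simp [h])
    rw [hsum] at this; norm_num at this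
  have hs : (0:ℝ) < S.card := by exact_mod_cast Finset.card_pos.2 hSne
  have hsum' : ∑ x ∈ S, f x = 1 := by
    rw [← hsum]
    exact Finset.sum_subset (Finset.subset_univ S) (fun x _ hx => hsupp x hx)
  have hpt : ∀ a : ℝ, 0 ≤ a →
      Real.negMulLog a ≤ a * Real.log S.card + 1 / S.card - a := by
    intro a ha
    rcases eq_or_lt_of_le ha with h | h
    · rw [← h]
      norm_num
    · have hl : Real.log (1 / (a * S.card)) ≤ 1 / (a * S.card) - 1 :=
        Real.log_le_sub_one_of_pos (by positivity)
      have hla : Real.log (1 / (a * S.card)) = - Real.log a - Real.log S.card := by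
        rw [Real.log_div one_ne_zero (by positivity), Real.log_one, Real.log_mul h.ne' (by positivity)]
        ring
      rw [hla] at hl
      have := mul_le_mul_of_nonneg_left hl ha
      simp only [Real.negMulLog, neg_mul]
      have ha' : a * (1 / (a * S.card) - 1) = 1 / S.card - a := by
        field_simp
      nlinarith
  rw [ent_eq]
  have h1 : ∑ x, Real.negMulLog (f x) = ∑ x ∈ S, Real.negMulLog (f x) := by
    refine (Finset.sum_subset (Finset.subset_univ S) (fun x _ hx => ?_)).symm
    rw [hsupp x hx]; simp
  rw [h1]
  calc ∑ x ∈ S, Real.negMulLog (f x)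
      ≤ ∑ x ∈ S, (f x * Real.log S.card + 1 / S.card - f x) :=
        Finset.sum_le_sum fun x _ => hpt (f x) (hf0 x)
    _ = (∑ x ∈ S, f x) * Real.log S.card + S.card * (1 / S.card) - ∑ x ∈ S, f x := by
        rw [Finset.sum_sub_distrib, Finset.sum_add_distrib, ← Finset.sum_mul, Finset.sum_const,
          nsmul_eq_mul]
    _ = Real.log S.card := by
        rw [hsum']
        field_simp
        ring

lemma fannes_one_sided {X : Type} [Fintype X] (P Q : X → ℝ) (hP : IsPMF P) (hQ : IsPMF Q)
    (hX : 2 ≤ Fintype.card X) (ht0 : 0 < tv P Q) (ht1 : tv P Q < 1) :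
    ent P - ent Q ≤ tv P Q * Real.log ((Fintype.card X : ℝ) - 1) + h2 (tv P Q) := by
  classical
  obtain ⟨hP0, hP1⟩ := hP
  obtain ⟨hQ0, hQ1⟩ := hQ
  set t := tv P Q with htdef
  have ht1' : (0:ℝ) < 1 - t := by linarith
  set m : X → ℝ := fun x => min (P x) (Q x) with hm
  have hmsum : ∑ x, m x = 1 - t := by
    have h1 : ∀ x ∈ Finset.univ (α := X), m x = (P x + Q x - |P x - Q x|) / 2 := by
      intro x _
      rcases le_total (P x) (Q x) with h | h
      · rw [hm]; simp only [min_eq_left h, abs_of_nonpos (by linarith : P x - Q x ≤ 0)]; ring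
      · rw [hm]; simp only [min_eq_right h, abs_of_nonneg (by linarith : 0 ≤ P x - Q x)]; ring
    rw [Finset.sum_congr rfl h1, ← Finset.sum_div, Finset.sum_sub_distrib, Finset.sum_add_distrib,
      hP1, hQ1]
    have : t = (1/2) * ∑ x, |P x - Q x| := rfl
    rw [this]; ring
  set M : X → ℝ := fun x => m x / (1 - t) with hM
  set P' : X → ℝ := fun x => (P x - m x) / t with hP'
  set Q' : X → ℝ := fun x => (Q x - m x) / t with hQ'
  have hm0 : ∀ x, 0 ≤ m x := fun x => le_min (hP0 x) (hQ0 x)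
  have hmP : ∀ x, m x ≤ P x := fun x => min_le_left _ _
  have hmQ : ∀ x, m x ≤ Q x := fun x => min_le_right _ _
  have hM0 : ∀ x, 0 ≤ M x := fun x => div_nonneg (hm0 x) ht1'.le
  have hP'0 : ∀ x, 0 ≤ P' x := fun x => div_nonneg (by linarith [hmP x]) ht0.le
  have hQ'0 : ∀ x, 0 ≤ Q' x := fun x => div_nonneg (by linarith [hmQ x]) ht0.le
  have hMsum : ∑ x, M x = 1 := by
    rw [hM, ← Finset.sum_div, hmsum, div_self ht1'.ne']
  have hP'sum : ∑ x, P' x = 1 := by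
    rw [hP', ← Finset.sum_div, Finset.sum_sub_distrib, hP1, hmsum]
    field_simp
    ring
  have hQ'sum : ∑ x, Q' x = 1 := by
    rw [hQ', ← Finset.sum_div, Finset.sum_sub_distrib, hQ1, hmsum]
    field_simp
    ring
  have hPdecomp : ∀ x, P x = (1 - t) * M x + t * P' x := by
    intro x
    rw [hM, hP']
    field_simp
    ring
  have hQdecomp : ∀ x, Q x = (1 - t) * M x + t * Q' x := by
    intro x
    rw [hM, hQ']
    field_simp
    ring
  -- upper bound on ent P
  have hup : ent P ≤ (1 - t) * ent M + t * ent P' + h2 t := by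
    rw [ent_eq, ent_eq, ent_eq, h2_eq]
    have hpt : ∀ x ∈ Finset.univ (α := X), Real.negMulLog (P x) ≤
        ((1 - t) * Real.negMulLog (M x) + M x * Real.negMulLog (1 - t))
        + (t * Real.negMulLog (P' x) + P' x * Real.negMulLog t) := by
      intro x _
      rw [hPdecomp x]
      calc Real.negMulLog ((1 - t) * M x + t * P' x)
          ≤ Real.negMulLog ((1 - t) * M x) + Real.negMulLog (t * P' x) :=
            negMulLog_add_le (mul_nonneg ht1'.le (hM0 x)) (mul_nonneg ht0.le (hP'0 x))
        _ = _ := by rw [Real.negMulLog_mul, Real.negMulLog_mul]; ring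
    have := Finset.sum_le_sum hpt
    rw [Finset.sum_add_distrib, Finset.sum_add_distrib, Finset.sum_add_distrib,
      ← Finset.mul_sum, ← Finset.mul_sum, ← Finset.sum_mul, ← Finset.sum_mul,
      hMsum, hP'sum] at this
    linarith
  -- lower bound on ent Q
  have hlow : (1 - t) * ent M ≤ ent Q := by
    have hQ'le : ∀ x, Q' x ≤ 1 := by
      intro x
      calc Q' x ≤ ∑ y, Q' y := Finset.single_le_sum (fun y _ => hQ'0 y) (Finset.mem_univ x)
        _ = 1 := hQ'sum
    rw [ent_eq, ent_eq]
    have hpt : ∀ x ∈ Finset.univ (α := X),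
        (1 - t) * Real.negMulLog (M x) ≤ Real.negMulLog (Q x) := by
      intro x _
      rw [hQdecomp x]
      have h1 := negMulLog_concave_pt (hM0 x) (hQ'0 x) ht0.le ht1.le
      have h2 : 0 ≤ Real.negMulLog (Q' x) := Real.negMulLog_nonneg (hQ'0 x) (hQ'le x)
      nlinarith
    have := Finset.sum_le_sum hpt
    rwa [← Finset.mul_sum] at this
  -- support bound for P'
  have hentP' : ent P' ≤ Real.log ((Fintype.card X : ℝ) - 1) := by
    set S : Finset X := Finset.univ.filter (fun x => Q x < P x) with hS
    have hsupp : ∀ x ∉ S, P' x = 0 := by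
      intro x hx
      rw [hS, Finset.mem_filter] at hx
      push_neg at hx
      have hPQ : P x ≤ Q x := hx (Finset.mem_univ x)
      have hmx : m x = P x := by rw [hm]; exact min_eq_left hPQ
      show (P x - m x) / t = 0
      rw [hmx, sub_self, zero_div]
    have hcard : (S.card : ℝ) ≤ (Fintype.card X : ℝ) - 1 := by
      have hne : ∃ x, ¬ (Q x < P x) := by
        by_contra h
        push_neg at h
        have : ∑ x, Q x < ∑ x, P x := by
          apply Finset.sum_lt_sum_of_nonempty
          · exact Finset.univ_nonempty_iff.2 (Fintype.card_pos_iff.1 (by omega))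
          · exact fun x _ => h x
        rw [hP1, hQ1] at this
        exact lt_irrefl _ this
      obtain ⟨x, hx⟩ := hne
      have hxS : x ∉ S := by rw [hS]; simp [hx]
      have : S.card < Fintype.card X := Finset.card_lt_card ⟨Finset.subset_univ S, fun h => hxS (h (Finset.mem_univ x))⟩
      have : S.card + 1 ≤ Fintype.card X := this
      have := (Nat.cast_le (α := ℝ)).2 this
      push_cast at this
      linarith
    have hSne : S.Nonempty := by
      by_contra h
      rw [Finset.not_nonempty_iff_eq_empty] at h
      have : ∑ x, P' x = 0 := Finset.sum_eq_zero fun x _ => hsupp x (by simp [h])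
      rw [hP'sum] at this; norm_num at this
    calc ent P' ≤ Real.log S.card := ent_le_log_card P' S hP'0 hP'sum hsupp
      _ ≤ Real.log ((Fintype.card X : ℝ) - 1) := by
          apply Real.log_le_log (by exact_mod_cast Finset.card_pos.2 hSne) hcard
  have hentM : 0 ≤ ent Q' := ent_nonneg hQ'0 hQ'sum
  have : ent P - ent Q ≤ t * ent P' + h2 t := by linarith
  have h3 : t * ent P' ≤ t * Real.log ((Fintype.card X : ℝ) - 1) :=
    mul_le_mul_of_nonneg_left hentP' ht0.le
  linarith
lemma F_mono {n : ℝ} (hn : 2 ≤ n) {a b : ℝ} (ha : 0 ≤ a) (hab : a ≤ b)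
    (hb : b ≤ 1 - 1/n) :
    a * Real.log (n - 1) + h2 a ≤ b * Real.log (n - 1) + h2 b := by
  set c : ℝ := 1 - 1/n with hc
  have hn0 : (0:ℝ) < n := by linarith
  have hc1 : c < 1 := by
    rw [hc]; have : (0:ℝ) < 1/n := by positivity
    linarith
  have hc0 : 0 < c := by
    rw [hc]
    have : 1/n ≤ 1/2 := by
      rw [div_le_div_iff₀ hn0 (by norm_num)]; linarith
    linarith
  set L : ℝ := Real.log (n - 1) with hL
  set F : ℝ → ℝ := fun e => e * L + Real.negMulLog e + Real.negMulLog (1 - e) with hF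
  have hmono : MonotoneOn F (Set.Icc 0 c) := by
    apply monotoneOn_of_hasDerivWithinAt_nonneg (f' := fun e => L - Real.log e + Real.log (1 - e))
      (convex_Icc 0 c)
    · rw [hF]
      fun_prop
    · intro e he
      rw [interior_Icc] at he
      have he0 : 0 < e := he.1
      have he1 : 0 < 1 - e := by linarith [he.2, hc1]
      have hd : HasDerivAt F (L - Real.log e + Real.log (1 - e)) e := by
        have h1 : HasDerivAt (fun e : ℝ => e * L) L e := by
          simpa using (hasDerivAt_id e).mul_const L
        have h2 : HasDerivAt Real.negMulLog (- Real.log e - 1) e :=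
          Real.hasDerivAt_negMulLog he0.ne'
        have h3 : HasDerivAt (fun e : ℝ => Real.negMulLog (1 - e))
            ((- Real.log (1 - e) - 1) * (-1)) e := by
          exact (Real.hasDerivAt_negMulLog he1.ne').comp e ((hasDerivAt_id e).const_sub 1)
        have := (h1.add h2).add h3
        refine this.congr_deriv ?_
        ring
      exact hd.hasDerivWithinAt
    · intro e he
      rw [interior_Icc] at he
      have he0 : 0 < e := he.1
      have he1 : 0 < 1 - e := by linarith [he.2, hc1]
      have hratio : e / (1 - e) ≤ n - 1 := by
        rw [div_le_iff₀ he1]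
        have hec : e ≤ c := he.2.le
        have : e * n ≤ n - 1 := by
          rw [hc] at hec
          calc e * n ≤ (1 - 1/n) * n := by nlinarith
            _ = n - 1 := by field_simp
        nlinarith [he1.le, hn0.le]
      have hlog : Real.log e - Real.log (1 - e) ≤ L := by
        rw [← Real.log_div he0.ne' he1.ne', hL]
        exact Real.log_le_log (by positivity) hratio
      linarith
  have := hmono (Set.mem_Icc.2 ⟨ha, le_trans hab hb⟩) (Set.mem_Icc.2 ⟨le_trans ha hab, hb⟩) hab
  simp only [hF] at this
  simp only [h2_eq]
  linarith [this]

end AuxFA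

/-- **Pinsker + Fannes–Audenaert.** If `KL(P ‖ Q) ≤ δ` with
`√(δ/2) ≤ 1 - 1/|𝒳|`, then
`|H(P) - H(Q)| ≤ √(δ/2)·log(|𝒳| - 1) + h₂(√(δ/2))`. -/
theorem entropy_diff_le_of_kl_le
    {X : Type} [Fintype X] (P Q : X → ℝ) (hP : IsPMF P) (hQ : IsPMF Q)
    (hac : ∀ x, 0 < P x → 0 < Q x) (hX : 2 ≤ Fintype.card X)
    (δ : ℝ) (hδ0 : 0 ≤ δ) (hKL : KLdiv P Q ≤ δ)
    (hvalid : Real.sqrt (δ / 2) ≤ 1 - 1 / (Fintype.card X : ℝ)) :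
    |ent P - ent Q|
      ≤ Real.sqrt (δ / 2) * Real.log ((Fintype.card X : ℝ) - 1)
        + h2 (Real.sqrt (δ / 2)) := by
  have hn : (2:ℝ) ≤ (Fintype.card X : ℝ) := by exact_mod_cast hX
  have hcardpos : (0:ℝ) < (Fintype.card X : ℝ) := by linarith
  have hε0 : 0 ≤ Real.sqrt (δ/2) := Real.sqrt_nonneg _
  have htle : tv P Q ≤ Real.sqrt (δ / 2) :=
    (pinsker P Q hP hQ hac).trans (Real.sqrt_le_sqrt (by linarith))
  have ht0 : 0 ≤ tv P Q := tv_nonneg P Q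
  have ht1 : tv P Q < 1 := by
    have h1 : (0:ℝ) < 1 / (Fintype.card X : ℝ) := by positivity
    have := htle.trans hvalid
    linarith
  rcases eq_or_lt_of_le ht0 with h | h
  · have hsum0 : ∑ x, |P x - Q x| = 0 := by
      have : tv P Q = (1/2) * ∑ x, |P x - Q x| := rfl
      rw [this] at h
      linarith
    have hPQ : P = Q := by
      funext x
      have := (Finset.sum_eq_zero_iff_of_nonneg (fun y _ => abs_nonneg (P y - Q y))).1
        hsum0 x (Finset.mem_univ x)
      have := abs_eq_zero.1 this
      linarith
    rw [hPQ, sub_self, abs_zero]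
    have := F_mono hn (le_refl 0) hε0 hvalid
    simp only [h2] at this ⊢
    simp only [Real.log_zero, mul_zero, neg_zero, zero_mul, sub_zero, Real.log_one,
      mul_one] at this
    linarith [this]
  · have htvsymm : tv Q P = tv P Q := by
      unfold tv
      congr 1
      exact Finset.sum_congr rfl fun x _ => abs_sub_comm (Q x) (P x)
    have h1 := fannes_one_sided P Q hP hQ hX h ht1
    have h2' := fannes_one_sided Q P hQ hP hX (htvsymm ▸ h) (htvsymm ▸ ht1)
    rw [htvsymm] at h2'
    have habs : |ent P - ent Q| ≤
        tv P Q * Real.log ((Fintype.card X : ℝ) - 1) + h2 (tv P Q) := by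
      rw [abs_sub_le_iff]
      constructor
      · exact h1
      · have : ent Q - ent P ≤ tv P Q * Real.log ((Fintype.card X : ℝ) - 1) + h2 (tv P Q) := h2'
        linarith [this]
    exact habs.trans (F_mono hn ht0 htle hvalid)
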